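/- Let p be a prime, p^r a prime power, and n ≥ p^r. Let λ be a partition of n with ℓ parts and let H ≤ S_{p^r} be a subgroup whose action on B is transitive. Then there is a bijection e from the set (Tab^λ)^H of H-fixed points of Tab^λ to the disjoint union, over indices i ∈ Fin ℓ with λ_i ≥ p^r, of the sets Tab^{λ − p^r e_i}, where Tab^{λ − p^r e_i} denotes the set of functions g : Fin (n − p^r) → Fin ℓ whose fiber over j has cardinality λ_j − p^r if j = i and λ_j otherwise. Moreover, identifying Fin (n − p^r) with Fin n ∖ B, the bijection e can be chosen to be S_{n−p^r}-equivariant: e(σ · f) = σ · e(f) for all σ ∈ S_{n−p^r} and all f ∈ (Tab^λ)^H. -/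

import Mathlib

/-- `f : Fin n → Fin ℓ` is a tableau of shape `lam`: the fiber over `i` has
cardinality `lam i`. -/
def TabP {n ℓ : ℕ} (lam : Fin ℓ → ℕ) (f : Fin n → Fin ℓ) : Prop :=
  ∀ i : Fin ℓ, (Finset.univ.filter fun a => f a = i).card = lam i


open Finset

private lemma count_cast {ℓ n m : ℕ} (hm : m ≤ n) (f : Fin n → Fin ℓ) (j : Fin ℓ) :
    (univ.filter fun a : Fin n => f a = j ∧ (a : ℕ) < m).card
      = (univ.filter fun b : Fin m => f (Fin.castLE hm b) = j).card := by
  refine Finset.card_bij (fun a ha => (⟨(a : ℕ), (Finset.mem_filter.mp ha).2.2⟩ : Fin m)) ?_ ?_ ?_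
  · intro a ha
    simp only [Finset.mem_filter, Finset.mem_univ, true_and]
    exact (Finset.mem_filter.mp ha).2.1
  · intro a ha b hb h
    simp only [Fin.mk.injEq] at h
    exact Fin.ext h
  · intro b hb
    refine ⟨Fin.castLE hm b, ?_, rfl⟩
    simp only [Finset.mem_filter, Finset.mem_univ, true_and]
    exact ⟨(Finset.mem_filter.mp hb).2, b.isLt⟩

private lemma count_lt {n m : ℕ} (hm : m ≤ n) :
    (univ.filter fun a : Fin n => (a : ℕ) < m).card = m := by
  have h := count_cast (ℓ := 1) hm (fun _ => 0) 0
  simpa using h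

private lemma count_split {ℓ n m : ℕ} (hm : m ≤ n) (f : Fin n → Fin ℓ) (i : Fin ℓ)
    (hconst : ∀ a : Fin n, m ≤ (a : ℕ) → f a = i) (j : Fin ℓ) :
    (univ.filter fun a : Fin n => f a = j).card
      = (univ.filter fun b : Fin m => f (Fin.castLE hm b) = j).card
        + (if j = i then n - m else 0) := by
  classical
  have hsplit := Finset.card_filter_add_card_filter_not
    (s := univ.filter fun a : Fin n => f a = j) (p := fun a : Fin n => (a : ℕ) < m)
  rw [Finset.filter_filter, Finset.filter_filter] at hsplit
  rw [← hsplit, count_cast hm f j]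
  congr 1
  by_cases hji : j = i
  · subst hji
    rw [if_pos rfl]
    have heq : (univ.filter fun a : Fin n => f a = j ∧ ¬ (a : ℕ) < m)
        = univ.filter fun a : Fin n => ¬ (a : ℕ) < m := by
      ext a
      simp only [Finset.mem_filter, Finset.mem_univ, true_and, and_iff_right_iff_imp]
      exact fun h => hconst a (le_of_not_gt h)
    rw [heq]
    have h2 := Finset.card_filter_add_card_filter_not
      (s := (univ : Finset (Fin n))) (p := fun a : Fin n => (a : ℕ) < m)
    rw [count_lt hm, Finset.card_univ, Fintype.card_fin] at h2
    omega
  · rw [if_neg hji]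
    rw [Finset.card_eq_zero]
    rw [Finset.filter_eq_empty_iff]
    rintro a - ⟨hfa, hge⟩
    exact hji (by rw [← hfa]; exact hconst a (le_of_not_gt hge))


private lemma sig_ext {ι γ : Type*} {Q : ι → Prop} {P : ι → γ → Prop}
    (x y : Σ i : {i : ι // Q i}, {g : γ // P i.1 g})
    (h1 : x.1.1 = y.1.1) (h2 : x.2.1 = y.2.1) : x = y := by
  obtain ⟨⟨i, hi⟩, ⟨g, hg⟩⟩ := x
  obtain ⟨⟨i', hi'⟩, ⟨g', hg'⟩⟩ := y
  dsimp at h1 h2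
  subst h1; subst h2
  rfl

/-- for a partition `λ` of `n` and a transitive subgroup `H ≤ S_{p^r}`,
there is an `S_{n−p^r}`-equivariant bijection from the `H`-fixed points of `Tab^λ`
to the disjoint union over `i` with `λ_i ≥ p^r` of the sets `Tab^{λ − p^r e_i}`. -/
theorem stmt6 (p r n ℓ : ℕ) (hp : p.Prime) (hn : p ^ r ≤ n)
    (lam : Fin ℓ → ℕ) (hanti : Antitone lam) (hpos : ∀ i, 0 < lam i)
    (hsum : ∑ i, lam i = n)
    (H : Subgroup (Equiv.Perm (Fin n)))
    -- `H ≤ S_{p^r}`: elements of `H` fix the complement of the last `p^r` points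
    (hH : ∀ σ ∈ H, ∀ a : Fin n, (a : ℕ) < n - p ^ r → σ a = a)
    -- the action of `H` on the last `p^r` points is transitive
    (htrans : ∀ a b : Fin n, n - p ^ r ≤ (a : ℕ) → n - p ^ r ≤ (b : ℕ) →
      ∃ σ ∈ H, σ a = b) :
    ∃ e : {f : Fin n → Fin ℓ // TabP lam f ∧ ∀ σ ∈ H, f ∘ ⇑σ⁻¹ = f} ≃
        Σ i : {i : Fin ℓ // p ^ r ≤ lam i},
          {g : Fin (n - p ^ r) → Fin ℓ //
            ∀ j : Fin ℓ, (Finset.univ.filter fun a => g a = j).card =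
              if j = i.1 then lam j - p ^ r else lam j},
      -- equivariance for the subgroup `S_{n-p^r}` fixing the last `p^r` points:
      -- if `τ` is the permutation of `Fin (n - p^r)` obtained by restricting `σ` along
      -- the identification of `Fin (n - p^r)` with `Fin n ∖ B`, then `e (σ • f) = σ • e f`
      ∀ σ : Equiv.Perm (Fin n), (∀ a : Fin n, n - p ^ r ≤ (a : ℕ) → σ a = a) →
        ∀ τ : Equiv.Perm (Fin (n - p ^ r)),
          (∀ j : Fin (n - p ^ r),
            σ (Fin.castLE (Nat.sub_le n (p ^ r)) j) =
              Fin.castLE (Nat.sub_le n (p ^ r)) (τ j)) →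
          ∀ (f : {f : Fin n → Fin ℓ // TabP lam f ∧ ∀ σ ∈ H, f ∘ ⇑σ⁻¹ = f})
            (hf' : TabP lam (f.1 ∘ ⇑σ⁻¹) ∧ ∀ σ' ∈ H, (f.1 ∘ ⇑σ⁻¹) ∘ ⇑σ'⁻¹ = f.1 ∘ ⇑σ⁻¹),
            (e ⟨f.1 ∘ ⇑σ⁻¹, hf'⟩).1 = (e f).1 ∧
            ∀ j : Fin (n - p ^ r),
              ((e ⟨f.1 ∘ ⇑σ⁻¹, hf'⟩).2).1 j = ((e f).2).1 (τ⁻¹ j) := by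
  classical
  have hprpos : 0 < p ^ r := pow_pos hp.pos r
  have hm : n - p ^ r ≤ n := Nat.sub_le n (p ^ r)
  have hmlt : n - p ^ r < n := by omega
  have hsub : n - (n - p ^ r) = p ^ r := by omega
  set m := n - p ^ r with hmdef
  let b0 : Fin n := ⟨m, hmlt⟩
  have hconst : ∀ f : {f : Fin n → Fin ℓ // TabP lam f ∧ ∀ σ ∈ H, f ∘ ⇑σ⁻¹ = f},
      ∀ a : Fin n, m ≤ (a : ℕ) → f.1 a = f.1 b0 := by
    intro f a ha
    obtain ⟨σ, hσH, hσ⟩ := htrans b0 a le_rfl ha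
    have h2 := congrFun (f.2.2 σ hσH) a
    simp only [Function.comp_apply] at h2
    have hb : σ⁻¹ a = b0 := by rw [← hσ]; exact σ.symm_apply_apply b0
    rw [hb] at h2
    exact h2.symm
  let F : {f : Fin n → Fin ℓ // TabP lam f ∧ ∀ σ ∈ H, f ∘ ⇑σ⁻¹ = f} →
      Σ i : {i : Fin ℓ // p ^ r ≤ lam i},
        {g : Fin m → Fin ℓ //
          ∀ j : Fin ℓ, (Finset.univ.filter fun a => g a = j).card =
            if j = i.1 then lam j - p ^ r else lam j} :=
    fun f =>
      ⟨⟨f.1 b0, by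
          have hcs := count_split hm f.1 (f.1 b0) (hconst f) (f.1 b0)
          rw [f.2.1 (f.1 b0), if_pos rfl, hsub] at hcs
          omega⟩,
       ⟨fun b => f.1 (Fin.castLE hm b), by
          intro j
          beta_reduce
          have hcs := count_split hm f.1 (f.1 b0) (hconst f) j
          rw [f.2.1 j, hsub] at hcs
          by_cases hji : j = f.1 b0
          · rw [if_pos hji] at hcs ⊢
            omega
          · rw [if_neg hji] at hcs ⊢
            omega⟩⟩

  have hFbij : Function.Bijective F := by
    constructor
    · intro f f' h
      have h1 : f.1 b0 = f'.1 b0 := congrArg (fun x => x.1.1) h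
      have h2 : (fun b => f.1 (Fin.castLE hm b)) = (fun b => f'.1 (Fin.castLE hm b)) :=
        congrArg (fun x => x.2.1) h
      apply Subtype.ext
      funext a
      by_cases ha : (a : ℕ) < m
      · have := congrFun h2 ⟨(a : ℕ), ha⟩
        exact this
      · rw [hconst f a (le_of_not_gt ha), hconst f' a (le_of_not_gt ha), h1]
    · rintro ⟨⟨i, hi⟩, ⟨g, hg⟩⟩
      refine ⟨⟨fun a => if h : (a : ℕ) < m then g ⟨(a : ℕ), h⟩ else i, ?_, ?_⟩, ?_⟩
      · intro j
        have hconst0 : ∀ a : Fin n, m ≤ (a : ℕ) →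
            (if h : (a : ℕ) < m then g ⟨(a : ℕ), h⟩ else i) = i :=
          fun a ha => dif_neg (by omega)
        have hcs := count_split hm
          (fun a => if h : (a : ℕ) < m then g ⟨(a : ℕ), h⟩ else i) i hconst0 j
        have hgeq : ∀ b : Fin m,
            (if h : ((Fin.castLE hm b : Fin n) : ℕ) < m
              then g ⟨((Fin.castLE hm b : Fin n) : ℕ), h⟩ else i) = g b :=
          fun b => dif_pos b.isLt
        simp only [hgeq] at hcs
        rw [hg j, hsub] at hcs
        rw [hcs]
        by_cases hji : j = i
        · rw [if_pos hji, if_pos hji]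
          subst hji
          omega
        · rw [if_neg hji, if_neg hji]
          omega
      · intro σ hσ
        funext a
        simp only [Function.comp_apply]
        by_cases ha : (a : ℕ) < m
        · rw [hH σ⁻¹ (inv_mem hσ) a ha]
        · have hinv : ¬ ((σ⁻¹ a : Fin n) : ℕ) < m := by
            intro hc
            have hx := hH σ hσ (σ⁻¹ a) hc
            rw [show σ (σ⁻¹ a) = a from σ.apply_symm_apply a] at hx
            rw [← hx] at hc
            exact ha hc
          rw [dif_neg hinv, dif_neg ha]
      · refine sig_ext (Q := fun i0 => p ^ r ≤ lam i0)
          (P := fun (i0 : Fin ℓ) (g : Fin m → Fin ℓ) => ∀ j : Fin ℓ, (Finset.univ.filter fun a => g a = j).card =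
            if j = i0 then lam j - p ^ r else lam j) _ _ ?_ ?_
        · exact dif_neg (lt_irrefl m)
        · funext b
          exact dif_pos b.isLt
  refine ⟨Equiv.ofBijective F hFbij, ?_⟩
  intro σ hσfix τ hτ f hf'
  have hσb : ∀ b : Fin m, σ⁻¹ (Fin.castLE hm b) = Fin.castLE hm (τ⁻¹ b) := by
    intro b
    have h1 : σ (Fin.castLE hm (τ⁻¹ b)) = Fin.castLE hm b := by
      rw [hτ (τ⁻¹ b), show τ (τ⁻¹ b) = b from τ.apply_symm_apply b]
    rw [← h1, show σ⁻¹ (σ (Fin.castLE hm (τ⁻¹ b))) = Fin.castLE hm (τ⁻¹ b) from σ.symm_apply_apply _]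
  constructor
  · apply Subtype.ext
    show (f.1 ∘ ⇑σ⁻¹) b0 = f.1 b0
    simp only [Function.comp_apply]
    have hb : σ b0 = b0 := hσfix b0 le_rfl
    rw [show σ⁻¹ b0 = b0 from (Equiv.Perm.inv_eq_iff_eq).mpr hb.symm]
  · intro j
    show (f.1 ∘ ⇑σ⁻¹) (Fin.castLE hm j) = f.1 (Fin.castLE hm (τ⁻¹ j))
    simp only [Function.comp_apply]
    rw [hσb j]
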